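/- If compact metric spaces Z₁ and Z₂ both satisfy the Lipschitz-minimal-property, then the product Z₁ × Z₂ (with, e.g., the max metric) also satisfies the Lipschitz-minimal-property. -/
import Mathlib


/-- The uniform metric on the homeomorphism group of a metric space. -/
noncomputable def uD {Z : Type*} [MetricSpace Z] (f g : Z ≃ₜ Z) : ℝ :=
  (⨆ z : Z, dist (f z) (g z)) + ⨆ z : Z, dist (f.symm z) (g.symm z)

/-- A path (for the uniform metric) inside a set `S` of homeomorphisms from `f` to `g`. -/
def PathInH {Z : Type*} [MetricSpace Z] (S : Set (Z ≃ₜ Z)) (f g : Z ≃ₜ Z) : Prop :=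
  ∃ γ : ℝ → Z ≃ₜ Z, γ 0 = f ∧ γ 1 = g ∧ (∀ t ∈ Set.Icc (0:ℝ) 1, γ t ∈ S) ∧
    ∀ t ∈ Set.Icc (0:ℝ) 1, ∀ ε > (0:ℝ), ∃ δ > (0:ℝ),
      ∀ s ∈ Set.Icc (0:ℝ) 1, |s - t| < δ → uD (γ s) (γ t) < ε

/-- A set of homeomorphisms acts minimally: finitely many images of any nonempty open set
cover the space. -/
def ActsMinimally {Z : Type*} [TopologicalSpace Z] (M : Set (Z ≃ₜ Z)) : Prop :=
  ∀ O : Set Z, IsOpen O → O.Nonempty →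
    ∃ F : Finset (Z ≃ₜ Z), ↑F ⊆ M ∧ (⋃ h ∈ F, ⇑h '' O) = Set.univ

/-- The Lipschitz-minimal-property: there are `L > 0` and a pathwise connected set `M` of
`L`-Lipschitz homeomorphisms in the identity path component which acts minimally. -/
def LMP (Z : Type*) [MetricSpace Z] : Prop :=
  ∃ L : ℝ, 0 < L ∧ ∃ M : Set (Z ≃ₜ Z),
    (∀ f ∈ M, (∀ z₁ z₂ : Z, dist (f z₁) (f z₂) ≤ L * dist z₁ z₂) ∧
      PathInH Set.univ (Homeomorph.refl Z) f) ∧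
    (∀ f ∈ M, ∀ g ∈ M, PathInH M f g) ∧
    ActsMinimally M

section Aux

variable {Z₁ Z₂ : Type*} [MetricSpace Z₁] [MetricSpace Z₂]

lemma aux_sup_nonneg {Z : Type*} [MetricSpace Z] (f g : Z ≃ₜ Z) :
    0 ≤ ⨆ z : Z, dist (f z) (g z) :=
  Real.iSup_nonneg fun _ => dist_nonneg

lemma aux_bdd {Z : Type*} [MetricSpace Z] [CompactSpace Z] (f g : Z ≃ₜ Z) :
    BddAbove (Set.range fun z => dist (f z) (g z)) :=
  (isCompact_range (f.continuous.dist g.continuous)).bddAbove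

lemma aux_dist_le_sup {Z : Type*} [MetricSpace Z] [CompactSpace Z] (f g : Z ≃ₜ Z) (z : Z) :
    dist (f z) (g z) ≤ ⨆ z : Z, dist (f z) (g z) :=
  le_ciSup (aux_bdd f g) z

lemma aux_prodCongr_symm (f₁ : Z₁ ≃ₜ Z₁) (f₂ : Z₂ ≃ₜ Z₂) :
    (f₁.prodCongr f₂).symm = f₁.symm.prodCongr f₂.symm := rfl

lemma aux_prodCongr_apply (f₁ : Z₁ ≃ₜ Z₁) (f₂ : Z₂ ≃ₜ Z₂) (z : Z₁ × Z₂) :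
    (f₁.prodCongr f₂) z = (f₁ z.1, f₂ z.2) := rfl

lemma aux_sup_prod_le [CompactSpace Z₁] [CompactSpace Z₂]
    (f₁ g₁ : Z₁ ≃ₜ Z₁) (f₂ g₂ : Z₂ ≃ₜ Z₂) :
    (⨆ z : Z₁ × Z₂, dist ((f₁.prodCongr f₂) z) ((g₁.prodCongr g₂) z)) ≤
      (⨆ z : Z₁, dist (f₁ z) (g₁ z)) + ⨆ z : Z₂, dist (f₂ z) (g₂ z) := by
  apply Real.iSup_le _ (add_nonneg (aux_sup_nonneg f₁ g₁) (aux_sup_nonneg f₂ g₂))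
  intro z
  rw [aux_prodCongr_apply, aux_prodCongr_apply, Prod.dist_eq]
  apply max_le
  · exact le_add_of_le_of_nonneg (aux_dist_le_sup f₁ g₁ z.1) (aux_sup_nonneg f₂ g₂)
  · exact le_add_of_nonneg_of_le (aux_sup_nonneg f₁ g₁) (aux_dist_le_sup f₂ g₂ z.2)

lemma aux_uD_prod_le [CompactSpace Z₁] [CompactSpace Z₂]
    (f₁ g₁ : Z₁ ≃ₜ Z₁) (f₂ g₂ : Z₂ ≃ₜ Z₂) :
    uD (f₁.prodCongr f₂) (g₁.prodCongr g₂) ≤ uD f₁ g₁ + uD f₂ g₂ := by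
  unfold uD
  rw [aux_prodCongr_symm, aux_prodCongr_symm]
  have h1 := aux_sup_prod_le f₁ g₁ f₂ g₂
  have h2 := aux_sup_prod_le f₁.symm g₁.symm f₂.symm g₂.symm
  linarith

lemma aux_path_prod [CompactSpace Z₁] [CompactSpace Z₂]
    {S₁ : Set (Z₁ ≃ₜ Z₁)} {S₂ : Set (Z₂ ≃ₜ Z₂)} {S : Set ((Z₁ × Z₂) ≃ₜ (Z₁ × Z₂))}
    {f₁ g₁ : Z₁ ≃ₜ Z₁} {f₂ g₂ : Z₂ ≃ₜ Z₂}
    (h₁ : PathInH S₁ f₁ g₁) (h₂ : PathInH S₂ f₂ g₂)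
    (hS : ∀ a ∈ S₁, ∀ b ∈ S₂, a.prodCongr b ∈ S) :
    PathInH S (f₁.prodCongr f₂) (g₁.prodCongr g₂) := by
  obtain ⟨γ₁, hγ₁0, hγ₁1, hγ₁S, hγ₁c⟩ := h₁
  obtain ⟨γ₂, hγ₂0, hγ₂1, hγ₂S, hγ₂c⟩ := h₂
  refine ⟨fun t => (γ₁ t).prodCongr (γ₂ t), by show (γ₁ 0).prodCongr (γ₂ 0) = _; rw [hγ₁0, hγ₂0], by show (γ₁ 1).prodCongr (γ₂ 1) = _; rw [hγ₁1, hγ₂1],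
    fun t ht => hS _ (hγ₁S t ht) _ (hγ₂S t ht), fun t ht ε hε => ?_⟩
  obtain ⟨δ₁, hδ₁, hc₁⟩ := hγ₁c t ht (ε/2) (by linarith)
  obtain ⟨δ₂, hδ₂, hc₂⟩ := hγ₂c t ht (ε/2) (by linarith)
  refine ⟨min δ₁ δ₂, lt_min hδ₁ hδ₂, fun s hs hst => ?_⟩
  have e1 := hc₁ s hs (lt_of_lt_of_le hst (min_le_left _ _))
  have e2 := hc₂ s hs (lt_of_lt_of_le hst (min_le_right _ _))
  calc uD ((γ₁ s).prodCongr (γ₂ s)) ((γ₁ t).prodCongr (γ₂ t))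
      ≤ uD (γ₁ s) (γ₁ t) + uD (γ₂ s) (γ₂ t) := aux_uD_prod_le _ _ _ _
    _ < ε := by linarith

end Aux


/-- The Lipschitz-minimal-property is preserved by products of compact metric spaces. -/
theorem stmt_12 (Z₁ Z₂ : Type*) [MetricSpace Z₁] [MetricSpace Z₂]
    [CompactSpace Z₁] [CompactSpace Z₂] (h1 : LMP Z₁) (h2 : LMP Z₂) :
    LMP (Z₁ × Z₂) := by
  obtain ⟨L₁, hL₁, M₁, hM₁lip, hM₁conn, hM₁min⟩ := h1
  obtain ⟨L₂, hL₂, M₂, hM₂lip, hM₂conn, hM₂min⟩ := h2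
  refine ⟨max L₁ L₂, lt_max_of_lt_left hL₁,
    {h | ∃ a ∈ M₁, ∃ b ∈ M₂, h = a.prodCongr b}, ?_, ?_, ?_⟩
  · rintro f ⟨a, ha, b, hb, rfl⟩
    constructor
    · intro z w
      rw [aux_prodCongr_apply, aux_prodCongr_apply, Prod.dist_eq, Prod.dist_eq]
      apply max_le
      · calc dist (a z.1) (a w.1) ≤ L₁ * dist z.1 w.1 := (hM₁lip a ha).1 _ _
          _ ≤ max L₁ L₂ * max (dist z.1 w.1) (dist z.2 w.2) :=
            mul_le_mul (le_max_left _ _) (le_max_left _ _) dist_nonneg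
              (le_trans hL₁.le (le_max_left _ _))
      · calc dist (b z.2) (b w.2) ≤ L₂ * dist z.2 w.2 := (hM₂lip b hb).1 _ _
          _ ≤ max L₁ L₂ * max (dist z.1 w.1) (dist z.2 w.2) :=
            mul_le_mul (le_max_right _ _) (le_max_right _ _) dist_nonneg
              (le_trans hL₁.le (le_max_left _ _))
    · have : (Homeomorph.refl (Z₁ × Z₂)) = (Homeomorph.refl Z₁).prodCongr (Homeomorph.refl Z₂) := by
        ext z <;> rfl
      rw [this]
      exact aux_path_prod (hM₁lip a ha).2 (hM₂lip b hb).2 (fun _ _ _ _ => Set.mem_univ _)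
  · rintro f ⟨a, ha, b, hb, rfl⟩ g ⟨c, hc, d, hd, rfl⟩
    exact aux_path_prod (hM₁conn a ha c hc) (hM₂conn b hb d hd)
      (fun x hx y hy => ⟨x, hx, y, hy, rfl⟩)
  · intro O hO hOne
    classical
    obtain ⟨⟨p, q⟩, hpq⟩ := hOne
    obtain ⟨U₁, U₂, hU₁, hU₂, hp, hq, hUO⟩ := isOpen_prod_iff.mp hO p q hpq
    obtain ⟨F₁, hF₁M, hF₁cov⟩ := hM₁min U₁ hU₁ ⟨p, hp⟩
    obtain ⟨F₂, hF₂M, hF₂cov⟩ := hM₂min U₂ hU₂ ⟨q, hq⟩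
    refine ⟨(F₁ ×ˢ F₂).image (fun pr => pr.1.prodCongr pr.2), ?_, ?_⟩
    · intro h hh
      simp only [Finset.coe_image, Set.mem_image, Finset.mem_coe, Finset.mem_product] at hh
      obtain ⟨⟨a, b⟩, ⟨haF, hbF⟩, rfl⟩ := hh
      exact ⟨a, hF₁M haF, b, hF₂M hbF, rfl⟩
    · apply Set.eq_univ_of_forall
      rintro ⟨x, y⟩
      have hx : x ∈ ⋃ h ∈ F₁, ⇑h '' U₁ := hF₁cov ▸ Set.mem_univ x
      have hy : y ∈ ⋃ h ∈ F₂, ⇑h '' U₂ := hF₂cov ▸ Set.mem_univ y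
      simp only [Set.mem_iUnion] at hx hy ⊢
      obtain ⟨a, haF, u, hu, hux⟩ := hx
      obtain ⟨b, hbF, v, hv, hvy⟩ := hy
      refine ⟨a.prodCongr b, Finset.mem_image.mpr ⟨(a, b), Finset.mem_product.mpr ⟨haF, hbF⟩, rfl⟩,
        (u, v), hUO ⟨hu, hv⟩, ?_⟩
      rw [aux_prodCongr_apply]
      exact Prod.ext hux hvy
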